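/- Let c > 0. There exists a unique x* ∈ (0, 1/c) such that e^{4cx*}(1/c − x*) = 1/c + x*. Moreover e^{4cx}(1/c − x) > 1/c + x for all x ∈ (0, x*) and e^{4cx}(1/c − x) < 1/c + x for all x ∈ (x*, 1/c). -/

import Mathlib

open Real

noncomputable def hfun (t : ℝ) : ℝ := Real.log (1 + t) - Real.log (1 - t) - 4 * t

lemma hfun_hasDerivAt {t : ℝ} (ht : t ∈ Set.Ioo (-1:ℝ) 1) :
    HasDerivAt hfun (2 / (1 - t^2) - 4) t := by
  obtain ⟨h1, h2⟩ := ht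
  have ha : (0:ℝ) < 1 + t := by linarith
  have hb : (0:ℝ) < 1 - t := by linarith
  have d1 : HasDerivAt (fun t : ℝ => Real.log (1 + t)) (1 / (1 + t)) t := by
    have := ((hasDerivAt_id t).const_add 1).log ha.ne'
    simpa using this
  have d2 : HasDerivAt (fun t : ℝ => Real.log (1 - t)) ((-1) / (1 - t)) t := by
    have := (((hasDerivAt_id t).neg).const_add 1).log hb.ne'
    simpa [sub_eq_add_neg] using this
  have d3 : HasDerivAt (fun t : ℝ => (4:ℝ) * t) 4 t := by
    simpa using (hasDerivAt_id t).const_mul (4:ℝ)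
  have heq : 2 / (1 - t^2) - 4 = 1 / (1 + t) - (-1) / (1 - t) - 4 := by
    rw [show (1:ℝ) - t^2 = (1+t)*(1-t) by ring]
    field_simp
    ring
  exact heq ▸ ((d1.sub d2).sub d3)

lemma hfun_contOn : ContinuousOn hfun (Set.Ico (0:ℝ) 1) := by
  apply ContinuousOn.sub (ContinuousOn.sub ?_ ?_) (by fun_prop)
  · apply ContinuousOn.log (by fun_prop)
    intro x hx; obtain ⟨h1, h2⟩ := hx; positivity
  · apply ContinuousOn.log (by fun_prop)
    intro x hx; obtain ⟨h1, h2⟩ := hx; nlinarith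

lemma hfun_convex : StrictConvexOn ℝ (Set.Ico (0:ℝ) 1) hfun := by
  apply StrictMonoOn.strictConvexOn_of_deriv (convex_Ico 0 1) hfun_contOn
  rw [interior_Ico]
  intro a ha b hb hab
  have da : deriv hfun a = 2 / (1 - a^2) - 4 :=
    (hfun_hasDerivAt ⟨by linarith [ha.1], ha.2⟩).deriv
  have db : deriv hfun b = 2 / (1 - b^2) - 4 :=
    (hfun_hasDerivAt ⟨by linarith [hb.1], hb.2⟩).deriv
  rw [da, db]
  have h1 : (0:ℝ) < 1 - b^2 := by nlinarith [hb.1, hb.2]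
  have h2 : 1 - b^2 < 1 - a^2 := by nlinarith [ha.1]
  have := div_lt_div_of_pos_left (by norm_num : (0:ℝ) < 2) h1 h2
  linarith

lemma hfun_zero : hfun 0 = 0 := by simp [hfun]

lemma hfun_half : hfun (1/2) < 0 := by
  have h3 : Real.log 3 < 2 := by
    rw [Real.log_lt_iff_lt_exp (by norm_num)]
    have := Real.add_one_lt_exp (by norm_num : (2:ℝ) ≠ 0)
    linarith
  have heq : Real.log (1 + 1/2) - Real.log (1 - 1/2) = Real.log 3 := by
    rw [← Real.log_div (by norm_num) (by norm_num)]
    norm_num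
  unfold hfun
  rw [show Real.log (1 + 1/2) - Real.log (1 - 1/2) - 4 * (1/2)
      = (Real.log (1 + 1/2) - Real.log (1 - 1/2)) - 2 by ring, heq]
  linarith

lemma hfun_99 : 0 < hfun (99/100) := by
  have h199 : (4:ℝ) < Real.log 199 := by
    rw [Real.lt_log_iff_exp_lt (by norm_num)]
    have h1 : Real.exp 1 < 2.7182818286 := Real.exp_one_lt_d9
    have h4 : Real.exp 4 = (Real.exp 1)^4 := by
      rw [← Real.exp_nat_mul]; norm_num
    have h5 : (Real.exp 1)^4 < 2.7182818286^4 :=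
      pow_lt_pow_left₀ h1 (Real.exp_pos 1).le (by norm_num)
    rw [h4]
    nlinarith
  have heq : Real.log (1 + 99/100) - Real.log (1 - 99/100) = Real.log 199 := by
    rw [← Real.log_div (by norm_num) (by norm_num)]
    norm_num
  unfold hfun
  rw [show Real.log (1 + 99/100) - Real.log (1 - 99/100) - 4 * (99/100)
      = (Real.log (1 + 99/100) - Real.log (1 - 99/100)) - 99/25 by ring, heq]
  linarith

lemma hfun_key {t : ℝ} (ht : t ∈ Set.Ioo (0:ℝ) 1) :
    (1 + t < Real.exp (4*t) * (1 - t) ↔ hfun t < 0) ∧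
    (Real.exp (4*t) * (1 - t) = 1 + t ↔ hfun t = 0) ∧
    (Real.exp (4*t) * (1 - t) < 1 + t ↔ 0 < hfun t) := by
  obtain ⟨h1, h2⟩ := ht
  have ha : (0:ℝ) < 1 + t := by linarith
  have hb : (0:ℝ) < 1 - t := by linarith
  have hL : (1 + t) / (1 - t) = Real.exp (Real.log (1+t) - Real.log (1-t)) := by
    rw [← Real.log_div ha.ne' hb.ne', Real.exp_log (by positivity)]
  have hh : hfun t = (Real.log (1+t) - Real.log (1-t)) - 4*t := by
    unfold hfun; ring
  refine ⟨?_, ?_, ?_⟩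
  · rw [show (1 + t < Real.exp (4*t) * (1 - t)) ↔ (1+t)/(1-t) < Real.exp (4*t) from
      (div_lt_iff₀ hb).symm, hL, Real.exp_lt_exp, hh]
    constructor <;> intro <;> linarith
  · rw [show (Real.exp (4*t) * (1 - t) = 1 + t) ↔ Real.exp (4*t) = (1+t)/(1-t) from
      (eq_div_iff hb.ne').symm, hL, Real.exp_eq_exp, hh]
    constructor <;> intro <;> linarith
  · rw [show (Real.exp (4*t) * (1 - t) < 1 + t) ↔ Real.exp (4*t) < (1+t)/(1-t) from
      (lt_div_iff₀ hb).symm, hL, Real.exp_lt_exp, hh]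
    constructor <;> intro <;> linarith

lemma hfun_exists : ∃ ts ∈ Set.Ioo (0:ℝ) 1, hfun ts = 0 ∧
    (∀ t ∈ Set.Ioo 0 ts, hfun t < 0) ∧ (∀ t ∈ Set.Ioo ts 1, 0 < hfun t) := by
  have hsub : Set.Icc (1/2 : ℝ) (99/100) ⊆ Set.Ico (0:ℝ) 1 := by
    intro x hx; exact ⟨by linarith [hx.1], by linarith [hx.2]⟩
  have hivt := intermediate_value_Icc (by norm_num : (1/2:ℝ) ≤ 99/100)
    (hfun_contOn.mono hsub)
  have h0mem : (0:ℝ) ∈ Set.Icc (hfun (1/2)) (hfun (99/100)) :=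
    ⟨hfun_half.le, hfun_99.le⟩
  obtain ⟨ts, hts, hts0⟩ := hivt h0mem
  have htsI : ts ∈ Set.Ioo (0:ℝ) 1 := ⟨by linarith [hts.1], by linarith [hts.2]⟩
  refine ⟨ts, htsI, hts0, ?_, ?_⟩
  · intro t ht
    obtain ⟨ht1, ht2⟩ := ht
    have hts_pos : 0 < ts := htsI.1
    set b := t / ts with hbdef
    have hb0 : 0 < b := by positivity
    have hb1 : b < 1 := (div_lt_one hts_pos).2 ht2
    have ha0 : 0 < 1 - b := by linarith
    have hmem0 : (0:ℝ) ∈ Set.Ico (0:ℝ) 1 := ⟨le_refl 0, by norm_num⟩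
    have hmemts : ts ∈ Set.Ico (0:ℝ) 1 := ⟨hts_pos.le, htsI.2⟩
    have := hfun_convex.2 hmem0 hmemts (by linarith : (0:ℝ) ≠ ts) ha0 hb0 (by ring)
    have hcomb : (1 - b) • (0:ℝ) + b • ts = t := by
      simp [smul_eq_mul, hbdef]
      field_simp
    rw [hcomb, hfun_zero, hts0] at this
    simp only [smul_eq_mul, mul_zero, add_zero, zero_add] at this
    linarith
  · intro t ht
    obtain ⟨ht1, ht2⟩ := ht
    have ht_pos : 0 < t := lt_trans htsI.1 ht1
    set b := ts / t with hbdef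
    have hb0 : 0 < b := div_pos htsI.1 ht_pos
    have hb1 : b < 1 := (div_lt_one ht_pos).2 ht1
    have ha0 : 0 < 1 - b := by linarith
    have hmem0 : (0:ℝ) ∈ Set.Ico (0:ℝ) 1 := ⟨le_refl 0, by norm_num⟩
    have hmemt : t ∈ Set.Ico (0:ℝ) 1 := ⟨ht_pos.le, ht2⟩
    have := hfun_convex.2 hmem0 hmemt (by linarith : (0:ℝ) ≠ t) ha0 hb0 (by ring)
    have hcomb : (1 - b) • (0:ℝ) + b • t = ts := by
      simp [smul_eq_mul, hbdef]
      field_simp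
    rw [hcomb, hfun_zero, hts0] at this
    simp only [smul_eq_mul, mul_zero, zero_add] at this
    nlinarith

/-- For `c > 0` there is a unique `x* ∈ (0, 1/c)` with
`e^{4cx*}(1/c − x*) = 1/c + x*`; moreover `e^{4cx}(1/c − x) > 1/c + x` on `(0, x*)`
and `e^{4cx}(1/c − x) < 1/c + x` on `(x*, 1/c)`. -/
theorem stmt_2 (c : ℝ) (hc : 0 < c) :
    ∃ xs : ℝ, xs ∈ Set.Ioo 0 (1/c) ∧
      Real.exp (4 * c * xs) * (1/c - xs) = 1/c + xs ∧
      (∀ y ∈ Set.Ioo (0:ℝ) (1/c),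
        Real.exp (4 * c * y) * (1/c - y) = 1/c + y → y = xs) ∧
      (∀ x ∈ Set.Ioo (0:ℝ) xs,
        Real.exp (4 * c * x) * (1/c - x) > 1/c + x) ∧
      (∀ x ∈ Set.Ioo xs (1/c),
        Real.exp (4 * c * x) * (1/c - x) < 1/c + x) := by
  obtain ⟨ts, htsI, hts0, hneg, hpos⟩ := hfun_exists
  -- translation between x-scale and t-scale
  have hmemt : ∀ x ∈ Set.Ioo (0:ℝ) (1/c), c * x ∈ Set.Ioo (0:ℝ) 1 := by
    intro x hx
    constructor
    · exact mul_pos hc hx.1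
    · have := hx.2
      calc c * x < c * (1/c) := by exact (mul_lt_mul_iff_right₀ hc).2 this
        _ = 1 := by field_simp
  have htrans : ∀ x : ℝ,
      (Real.exp (4 * c * x) * (1/c - x) = 1/c + x ↔
        Real.exp (4 * (c*x)) * (1 - c*x) = 1 + c*x) ∧
      (1/c + x < Real.exp (4 * c * x) * (1/c - x) ↔
        1 + c*x < Real.exp (4 * (c*x)) * (1 - c*x)) ∧
      (Real.exp (4 * c * x) * (1/c - x) < 1/c + x ↔
        Real.exp (4 * (c*x)) * (1 - c*x) < 1 + c*x) := by
    intro x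
    have h1 : Real.exp (4 * c * x) * (1/c - x)
        = (Real.exp (4*(c*x)) * (1 - c*x)) / c := by
      rw [show 4*c*x = 4*(c*x) by ring]
      field_simp
    have h2 : 1/c + x = (1 + c*x)/c := by field_simp
    rw [h1, h2]
    exact ⟨div_left_inj' hc.ne', div_lt_div_iff_of_pos_right hc, div_lt_div_iff_of_pos_right hc⟩
  have hxs_eq : c * (ts / c) = ts := by field_simp
  have hxsI : ts / c ∈ Set.Ioo (0:ℝ) (1/c) := by
    constructor
    · exact div_pos htsI.1 hc
    · rw [div_lt_div_iff₀ hc hc, one_mul]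
      nlinarith [htsI.2]
  refine ⟨ts / c, hxsI, ?_, ?_, ?_, ?_⟩
  · rw [(htrans (ts/c)).1, hxs_eq]
    exact ((hfun_key htsI).2.1).mpr hts0
  · intro y hy heq
    have hty : c * y ∈ Set.Ioo (0:ℝ) 1 := hmemt y hy
    have h0 : hfun (c * y) = 0 := ((hfun_key hty).2.1).mp ((htrans y).1.mp heq)
    have hcy : c * y = ts := by
      by_contra hne
      rcases lt_or_gt_of_ne hne with h | h
      · exact absurd h0 (hneg (c*y) ⟨hty.1, h⟩).ne
      · exact absurd h0 (hpos (c*y) ⟨h, hty.2⟩).ne'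
    have : c * y = c * (ts / c) := by rw [hxs_eq, hcy]
    exact mul_left_cancel₀ hc.ne' this
  · intro x hx
    have hx1 : 0 < c * x := mul_pos hc hx.1
    have hx2 : c * x < ts := by
      have := (mul_lt_mul_iff_right₀ hc).2 hx.2
      rwa [hxs_eq] at this
    have hI : c * x ∈ Set.Ioo (0:ℝ) 1 := ⟨hx1, hx2.trans htsI.2⟩
    have := ((hfun_key hI).1).mpr (hneg (c*x) ⟨hx1, hx2⟩)
    exact (htrans x).2.1.mpr this
  · intro x hx
    have hxI : x ∈ Set.Ioo (0:ℝ) (1/c) := ⟨lt_trans hxsI.1 hx.1, hx.2⟩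
    have htI : c * x ∈ Set.Ioo (0:ℝ) 1 := hmemt x hxI
    have hx1 : ts < c * x := by
      have := (mul_lt_mul_iff_right₀ hc).2 hx.1
      rwa [hxs_eq] at this
    have := ((hfun_key htI).2.2).mpr (hpos (c*x) ⟨hx1, htI.2⟩)
    exact (htrans x).2.2.mpr this
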